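/- Let T and T' be triangles in ℝ² such that T is not congruent to T' under the group generated by translations and point reflections (i.e., there are no s ∈ {±1} and t ∈ ℝ² with T' = sT + t). Then the set of real numbers μ for which the sheared triangles A_μ T and A_μ T' are congruent under Euclidean isometries (including reflections), where A_μ = [[1, μ],[0, 1]], is finite. -/

import Mathlib

/-- The shear map A_μ = [[1, μ],[0, 1]] on the Euclidean plane. -/
def shear (μ : ℝ) (p : EuclideanSpace ℝ (Fin 2)) : EuclideanSpace ℝ (Fin 2) :=
  WithLp.toLp 2 ![p 0 + μ * p 1, p 1]

/-- Congruence of subsets of the plane under Euclidean isometries (including reflections). -/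
def EuclCongruent (A B : Set (EuclideanSpace ℝ (Fin 2))) : Prop :=
  ∃ f : EuclideanSpace ℝ (Fin 2) ≃ᵢ EuclideanSpace ℝ (Fin 2), f '' A = B

noncomputable section AuxShear

local notation "E2" => EuclideanSpace ℝ (Fin 2)

def shearL (μ : ℝ) : EuclideanSpace ℝ (Fin 2) →ₗ[ℝ] EuclideanSpace ℝ (Fin 2) where
  toFun := shear μ
  map_add' p q := by
    ext i
    fin_cases i <;> simp [shear] <;> ring
  map_smul' c p := by
    ext i
    fin_cases i <;> simp [shear] <;> ring

lemma shear_inj (μ : ℝ) : Function.Injective (shear μ) := by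
  intro p q h
  have h0 := congrArg (· 0) h
  have h1 := congrArg (· 1) h
  simp [shear] at h0 h1
  ext i
  fin_cases i <;> simp_all

lemma dist_shear_sq (μ : ℝ) (a b : EuclideanSpace ℝ (Fin 2)) :
    dist (shear μ a) (shear μ b) ^ 2
      = ((a 0 - b 0) + μ * (a 1 - b 1)) ^ 2 + (a 1 - b 1) ^ 2 := by
  rw [EuclideanSpace.dist_eq, Real.sq_sqrt (by positivity)]
  simp [Fin.sum_univ_two, shear, Real.dist_eq, sq_abs]
  ring

open Finset in
lemma mem_hull_iff {V : Type*} [AddCommGroup V] [Module ℝ V] {n : ℕ} (v : Fin n → V) (x : V) :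
    x ∈ convexHull ℝ (Set.range v) ↔
      ∃ c : Fin n → ℝ, (∀ i, 0 ≤ c i) ∧ ∑ i, c i = 1 ∧ ∑ i, c i • v i = x := by
  classical
  constructor
  · rw [convexHull_range_eq_exists_affineCombination]
    rintro ⟨s, w, h0, h1, rfl⟩
    refine ⟨fun i => if i ∈ s then w i else 0, fun i => by dsimp; split <;> simp_all [h0], ?_, ?_⟩
    · rw [Finset.sum_ite_mem, Finset.univ_inter, h1]
    · rw [s.affineCombination_eq_linear_combination v w h1]
      rw [← Finset.univ_inter s, ← Finset.sum_ite_mem Finset.univ s (fun i => w i • v i)]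
      exact Finset.sum_congr rfl fun i _ => by
        by_cases h : i ∈ s <;> simp [h, ite_smul]
  · rintro ⟨c, h0, h1, rfl⟩
    exact mem_convexHull_of_exists_fintype c v h0 h1 (fun i => Set.mem_range_self i) rfl

lemma bary_unique {V : Type*} [AddCommGroup V] [Module ℝ V] {n : ℕ} {u : Fin n → V}
    (hu : AffineIndependent ℝ u) {c d : Fin n → ℝ} (hc : ∑ i, c i = 1) (hd : ∑ i, d i = 1)
    (h : ∑ i, c i • u i = ∑ i, d i • u i) : c = d := by
  refine (affineIndependent_iff_eq_of_fintype_affineCombination_eq ℝ u).1 hu c d hc hd ?_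
  rw [Finset.univ.affineCombination_eq_linear_combination u c hc,
    Finset.univ.affineCombination_eq_linear_combination u d hd, h]

lemma range_subset_of_hull_eq {V : Type*} [AddCommGroup V] [Module ℝ V] {n : ℕ}
    {u w : Fin n → V} (hu : AffineIndependent ℝ u)
    (h : convexHull ℝ (Set.range u) = convexHull ℝ (Set.range w)) :
    Set.range u ⊆ Set.range w := by
  classical
  rintro - ⟨k, rfl⟩
  obtain ⟨lam, hlam0, hlam1, hlamsum⟩ :=
    (mem_hull_iff w (u k)).1 (h ▸ subset_convexHull ℝ _ (Set.mem_range_self k))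
  have hw : ∀ i, ∃ c : Fin n → ℝ, (∀ j, 0 ≤ c j) ∧ ∑ j, c j = 1 ∧ ∑ j, c j • u j = w i :=
    fun i => (mem_hull_iff u (w i)).1 (h.symm ▸ subset_convexHull ℝ _ (Set.mem_range_self i))
  choose mu hmu0 hmu1 hmusum using hw
  set c : Fin n → ℝ := fun j => ∑ i, lam i * mu i j with hc
  have hcsum : ∑ j, c j = 1 := by
    rw [Finset.sum_comm]
    simp_rw [← Finset.mul_sum, hmu1, mul_one, hlam1]
  have hcvec : ∑ j, c j • u j = u k := by
    simp_rw [hc, Finset.sum_smul, mul_smul]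
    rw [Finset.sum_comm]
    simp_rw [← Finset.smul_sum, hmusum, hlamsum]
  have hdelta : c = fun j => if j = k then (1:ℝ) else 0 := by
    refine bary_unique hu hcsum (by simp) ?_
    rw [hcvec]
    simp [ite_smul]
  have hck : ∑ i, lam i * mu i k = 1 := by
    have := congrFun hdelta k; simp [hc] at this; exact this
  have hone : ∀ i, mu i k ≤ 1 := by
    intro i
    calc mu i k ≤ ∑ j, mu i j := Finset.single_le_sum (fun j _ => hmu0 i j) (Finset.mem_univ k)
    _ = 1 := hmu1 i
  have hzero : ∑ i, lam i * (1 - mu i k) = 0 := by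
    simp_rw [mul_sub, Finset.sum_sub_distrib, mul_one, hlam1, hck, sub_self]
  have hterm : ∀ i ∈ Finset.univ, lam i * (1 - mu i k) = 0 :=
    (Finset.sum_eq_zero_iff_of_nonneg
      (fun i _ => mul_nonneg (hlam0 i) (by linarith [hone i]))).1 hzero
  obtain ⟨i, -, hlne⟩ : ∃ i ∈ Finset.univ, lam i ≠ 0 := by
    by_contra hcon
    push_neg at hcon
    simp only [Finset.sum_eq_zero (fun i hi => hcon i hi)] at hlam1
    norm_num at hlam1
  have hmuik : mu i k = 1 := by
    have := hterm i (Finset.mem_univ i)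
    rcases mul_eq_zero.1 this with h' | h'
    · exact absurd h' hlne
    · linarith
  have hrest : ∀ j, j ≠ k → mu i j = 0 := by
    intro j hj
    have hsum' : ∑ j' ∈ Finset.univ.erase k, mu i j' = 0 := by
      have := Finset.add_sum_erase Finset.univ (mu i) (Finset.mem_univ k)
      rw [hmu1 i, hmuik] at this
      linarith
    exact (Finset.sum_eq_zero_iff_of_nonneg (fun j' _ => hmu0 i j')).1 hsum' j
      (Finset.mem_erase.2 ⟨hj, Finset.mem_univ j⟩)
  refine ⟨i, ?_⟩
  rw [← hmusum i]
  rw [← Finset.add_sum_erase Finset.univ (fun j => mu i j • u j) (Finset.mem_univ k), hmuik,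
    one_smul, Finset.sum_eq_zero, add_zero]
  intro j hj
  rw [hrest j (Finset.mem_erase.1 hj).1, zero_smul]

lemma indep_coeff {V : Type*} [AddCommGroup V] [Module ℝ V] {v : Fin 3 → V}
    (hv : AffineIndependent ℝ v) {a b : ℝ}
    (h : a • (v 2 - v 0) + b • (v 1 - v 0) = 0) : a = 0 ∧ b = 0 := by
  have key : (![1 - a - b, b, a] : Fin 3 → ℝ) = ![1, 0, 0] := by
    refine bary_unique hv ?_ ?_ ?_
    · simp [Fin.sum_univ_three]
    · simp [Fin.sum_univ_three]
    · simp only [Fin.sum_univ_three, Matrix.cons_val_zero, Matrix.cons_val_one, Matrix.head_cons,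
        Matrix.cons_val_two, Matrix.tail_cons, one_smul, zero_smul, add_zero]
      have : (1 - a - b) • v 0 + b • v 1 + a • v 2
          = v 0 + (a • (v 2 - v 0) + b • (v 1 - v 0)) := by module
      rw [this, h]
      simp
  constructor
  · have := congrFun key 2; simpa using this
  · have := congrFun key 1; simpa using this

lemma edge_pm {x y x' y' : ℝ} {S : Set ℝ} (hS : S.Infinite)
    (h : ∀ μ ∈ S, (x' + μ * y') ^ 2 + y' ^ 2 = (x + μ * y) ^ 2 + y ^ 2) :
    (x' = x ∧ y' = y) ∨ (x' = -x ∧ y' = -y) := by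
  set p : Polynomial ℝ :=
    (Polynomial.C x' + Polynomial.X * Polynomial.C y') ^ 2 + Polynomial.C (y' ^ 2)
      - ((Polynomial.C x + Polynomial.X * Polynomial.C y) ^ 2 + Polynomial.C (y ^ 2)) with hp
  have hroot : ∀ μ ∈ S, p.IsRoot μ := by
    intro μ hμ
    simp only [hp, Polynomial.IsRoot, Polynomial.eval_sub, Polynomial.eval_add,
      Polynomial.eval_pow, Polynomial.eval_mul, Polynomial.eval_C, Polynomial.eval_X]
    have := h μ hμ
    ring_nf
    ring_nf at this
    linarith
  have hp0 : p = 0 := by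
    by_contra hne
    exact (Polynomial.finite_setOf_isRoot hne).not_infinite (hS.mono hroot)
  have e0 : x' ^ 2 + y' ^ 2 = x ^ 2 + y ^ 2 := by
    have := congrArg (Polynomial.eval 0) hp0; simp [hp] at this; linarith
  have e1 : (x' + y') ^ 2 + y' ^ 2 = (x + y) ^ 2 + y ^ 2 := by
    have := congrArg (Polynomial.eval 1) hp0; simp [hp] at this; nlinarith [this]
  have em : (x' - y') ^ 2 + y' ^ 2 = (x - y) ^ 2 + y ^ 2 := by
    have := congrArg (Polynomial.eval (-1)) hp0; simp [hp] at this; nlinarith [this]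
  have hxy : x' * y' = x * y := by nlinarith
  have hy2 : y' ^ 2 = y ^ 2 := by nlinarith
  have hx2 : x' ^ 2 = x ^ 2 := by nlinarith
  rcases mul_self_eq_mul_self_iff.1 (by nlinarith : y' * y' = y * y) with hy | hy
  · rcases eq_or_ne y 0 with h0 | h0
    · rcases mul_self_eq_mul_self_iff.1 (by nlinarith : x' * x' = x * x) with hx | hx
      · exact Or.inl ⟨hx, hy⟩
      · exact Or.inr ⟨hx, by rw [hy, h0]; ring⟩
    · left
      refine ⟨?_, hy⟩
      have h' : x' * y = x * y := by rw [hy] at hxy; exact hxy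
      exact mul_right_cancel₀ h0 h'
  · rcases eq_or_ne y 0 with h0 | h0
    · rcases mul_self_eq_mul_self_iff.1 (by nlinarith : x' * x' = x * x) with hx | hx
      · exact Or.inl ⟨hx, by rw [hy, h0]; ring⟩
      · exact Or.inr ⟨hx, hy⟩
    · right
      refine ⟨?_, hy⟩
      have h' : x' * (-y) = x * y := by rw [hy] at hxy; exact hxy
      have h'' := mul_right_cancel₀ h0 (by linarith [h'] : -x' * y = x * y)
      linarith

end AuxShear

/-- if two triangles are not related by a translation or a point reflection
(composition of -id with a translation), then the set of shear parameters μ for which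
the sheared triangles are congruent is finite. -/
theorem stmt_8 (v v' : Fin 3 → EuclideanSpace ℝ (Fin 2))
    (hv : AffineIndependent ℝ v) (hv' : AffineIndependent ℝ v')
    (T : Set (EuclideanSpace ℝ (Fin 2))) (T' : Set (EuclideanSpace ℝ (Fin 2)))
    (hT : T = convexHull ℝ (Set.range v)) (hT' : T' = convexHull ℝ (Set.range v'))
    (hne : ¬ ∃ (s : ℝ) (t : EuclideanSpace ℝ (Fin 2)),
      (s = 1 ∨ s = -1) ∧ T' = (fun p => s • p + t) '' T) :
    {μ : ℝ | EuclCongruent (shear μ '' T) (shear μ '' T')}.Finite := by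
  subst hT hT'
  by_contra hfin
  have hinf : {μ : ℝ | EuclCongruent (shear μ '' convexHull ℝ (Set.range v))
      (shear μ '' convexHull ℝ (Set.range v'))}.Infinite := hfin
  set S := {μ : ℝ | EuclCongruent (shear μ '' convexHull ℝ (Set.range v))
      (shear μ '' convexHull ℝ (Set.range v'))} with hSdef
  -- Step 1: for each μ ∈ S, a vertex correspondence preserving sheared distances
  have step1 : ∀ μ ∈ S, ∃ g : Fin 3 → Fin 3, Function.Bijective g ∧
      ∀ i j, dist (shear μ (v' (g i))) (shear μ (v' (g j)))
        = dist (shear μ (v i)) (shear μ (v j)) := by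
    intro μ hμ
    obtain ⟨f, hf⟩ := hμ
    -- rewrite both sides as hulls of ranges
    have hsv : ∀ (w : Fin 3 → EuclideanSpace ℝ (Fin 2)),
        shear μ '' convexHull ℝ (Set.range w)
          = convexHull ℝ (Set.range (fun i => shear μ (w i))) := by
      intro w
      have h1 := (shearL μ).image_convexHull (Set.range w)
      have h2 : shear μ '' Set.range w = Set.range (fun i => shear μ (w i)) :=
        (Set.range_comp (shear μ) w).symm
      rw [← h2]
      exact h1
    have hF := f.toRealAffineIsometryEquiv
    have hfc : ⇑(f.toRealAffineIsometryEquiv) = ⇑f := rfl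
    have himg : f '' convexHull ℝ (Set.range (fun i => shear μ (v i)))
        = convexHull ℝ (Set.range (fun i => f (shear μ (v i)))) := by
      have h1 := (f.toRealAffineIsometryEquiv.toAffineEquiv.toAffineMap).image_convexHull
        (Set.range (fun i => shear μ (v i)))
      have hcoe : ⇑(f.toRealAffineIsometryEquiv.toAffineEquiv.toAffineMap) = ⇑f := hfc
      rw [hcoe] at h1
      rw [h1, ← Set.range_comp]
      rfl
    have hulleq : convexHull ℝ (Set.range (fun i => f (shear μ (v i))))
        = convexHull ℝ (Set.range (fun i => shear μ (v' i))) := by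
      rw [← himg, ← hsv v, ← hsv v', hf]
    -- affine independence of both families
    have hai1 : AffineIndependent ℝ (fun i => f (shear μ (v i))) := by
      have h1 : AffineIndependent ℝ (fun i => shear μ (v i)) :=
        hv.map' (shearL μ).toAffineMap (shear_inj μ)
      have h2 := h1.map' (f.toRealAffineIsometryEquiv.toAffineEquiv.toAffineMap)
        (by rw [show ⇑(f.toRealAffineIsometryEquiv.toAffineEquiv.toAffineMap) = ⇑f from hfc]
            exact f.injective)
      exact h2
    have hai2 : AffineIndependent ℝ (fun i => shear μ (v' i)) :=
      hv'.map' (shearL μ).toAffineMap (shear_inj μ)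
    have hr1 : Set.range (fun i => f (shear μ (v i))) ⊆ Set.range (fun i => shear μ (v' i)) :=
      range_subset_of_hull_eq hai1 hulleq
    -- build g
    have hex : ∀ i, ∃ j, shear μ (v' j) = f (shear μ (v i)) := by
      intro i
      obtain ⟨j, hj⟩ := hr1 (Set.mem_range_self i)
      exact ⟨j, hj⟩
    choose g hg using hex
    have hginj : Function.Injective g := by
      intro i j hij
      have : f (shear μ (v i)) = f (shear μ (v j)) := by rw [← hg i, ← hg j, hij]
      exact hv.injective (shear_inj μ (f.injective this))
    refine ⟨g, (Finite.injective_iff_bijective).1 hginj, fun i j => ?_⟩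
    rw [hg i, hg j, f.dist_eq]
  -- Step 2: pigeonhole over the finitely many g
  have hsub : S ⊆ ⋃ g : Fin 3 → Fin 3, {μ ∈ S | Function.Bijective g ∧
      ∀ i j, dist (shear μ (v' (g i))) (shear μ (v' (g j)))
        = dist (shear μ (v i)) (shear μ (v j))} := by
    intro μ hμ
    obtain ⟨g, hb, hd⟩ := step1 μ hμ
    exact Set.mem_iUnion.2 ⟨g, hμ, hb, hd⟩
  obtain ⟨g, hSg⟩ : ∃ g : Fin 3 → Fin 3, {μ ∈ S | Function.Bijective g ∧
      ∀ i j, dist (shear μ (v' (g i))) (shear μ (v' (g j)))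
        = dist (shear μ (v i)) (shear μ (v j))}.Infinite := by
    by_contra hcon
    push_neg at hcon
    exact (hinf.mono hsub) (Set.finite_iUnion hcon)
  obtain ⟨μ0, hμ0⟩ := hSg.nonempty
  have hbij : Function.Bijective g := hμ0.2.1
  set S' := {μ ∈ S | Function.Bijective g ∧
      ∀ i j, dist (shear μ (v' (g i))) (shear μ (v' (g j)))
        = dist (shear μ (v i)) (shear μ (v j))} with hS'def
  -- Step 3: each edge vector matches up to a sign
  have step3 : ∀ i j : Fin 3, ∃ e : ℝ, (e = 1 ∨ e = -1) ∧
      v' (g i) - v' (g j) = e • (v i - v j) := by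
    intro i j
    have hquad : ∀ μ ∈ S',
        ((v' (g i) 0 - v' (g j) 0) + μ * (v' (g i) 1 - v' (g j) 1)) ^ 2
            + (v' (g i) 1 - v' (g j) 1) ^ 2
          = ((v i 0 - v j 0) + μ * (v i 1 - v j 1)) ^ 2 + (v i 1 - v j 1) ^ 2 := by
      intro μ hμ
      have hd := hμ.2.2 i j
      have := congrArg (· ^ 2) hd
      simpa only [dist_shear_sq] using this
    rcases edge_pm hSg hquad with ⟨hx, hy⟩ | ⟨hx, hy⟩
    · refine ⟨1, Or.inl rfl, ?_⟩
      ext k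
      fin_cases k
      · simpa using hx
      · simpa using hy
    · refine ⟨-1, Or.inr rfl, ?_⟩
      ext k
      fin_cases k
      · simpa using hx
      · simpa using hy
  obtain ⟨e1, he1s, he1⟩ := step3 1 0
  obtain ⟨e2, he2s, he2⟩ := step3 2 0
  obtain ⟨e3, he3s, he3⟩ := step3 2 1
  -- Step 4: all signs agree
  have hsum : (e2 - e3) • (v 2 - v 0) + (e3 - e1) • (v 1 - v 0) = 0 := by
    have hC : e2 • (v 2 - v 0) - e1 • (v 1 - v 0) = e3 • (v 2 - v 1) := by
      rw [← he1, ← he2, ← he3]; abel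
    have hvv : v 2 - v 1 = (v 2 - v 0) - (v 1 - v 0) := by abel
    rw [hvv] at hC
    linear_combination (norm := module) hC
  obtain ⟨h23, h31⟩ := indep_coeff hv hsum
  have he2e : e2 = e1 := by linarith
  have he3e : e3 = e1 := by linarith
  -- Step 5: construct the forbidden translation/point-reflection
  set s := e1 with hs
  set t := v' (g 0) - s • v 0 with ht
  have h0' : v' (g 0) = s • v 0 + t := by rw [ht]; abel
  have h1' : v' (g 1) = s • v 1 + t := by
    have h := he1
    rw [ht]
    have : v' (g 1) = v' (g 0) + s • (v 1 - v 0) := by rw [← h]; abel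
    rw [this, smul_sub]
    abel
  have h2' : v' (g 2) = s • v 2 + t := by
    have h := he2
    rw [he2e] at h
    rw [ht]
    have : v' (g 2) = v' (g 0) + s • (v 2 - v 0) := by rw [← h]; abel
    rw [this, smul_sub]
    abel
  have hvert : ∀ i, v' (g i) = s • v i + t := by
    intro i
    fin_cases i
    · exact h0'
    · exact h1'
    · exact h2'
  apply hne
  refine ⟨s, t, ?_, ?_⟩
  · exact he1s
  · -- T' = (fun p => s • p + t) '' T
    have hrange : Set.range v' = Set.range (fun i => s • v i + t) := by
      rw [show (fun i => s • v i + t) = v' ∘ g from funext fun i => (hvert i).symm]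
      rw [Set.range_comp, hbij.surjective.range_eq, Set.image_univ]
    have haff : convexHull ℝ ((fun p => s • p + t) '' Set.range v)
        = (fun p => s • p + t) '' convexHull ℝ (Set.range v) := by
      have hmap : (fun p : EuclideanSpace ℝ (Fin 2) => s • p + t)
          = ⇑((AffineEquiv.constVAdd ℝ (EuclideanSpace ℝ (Fin 2)) t).toAffineMap.comp
              (s • (LinearMap.id : EuclideanSpace ℝ (Fin 2) →ₗ[ℝ]
                EuclideanSpace ℝ (Fin 2))).toAffineMap) := by
        funext p
        simp [AffineEquiv.constVAdd_apply, vadd_eq_add]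
        abel
      rw [hmap, (AffineMap.image_convexHull _ _).symm]
    rw [hrange]
    have : Set.range (fun i => s • v i + t) = (fun p => s • p + t) '' Set.range v := by
      rw [← Set.range_comp]
      rfl
    rw [this, haff]
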